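/- For any matrix A ∈ ℝ^{m×n} and any unit vector x ∈ ℝ^m that is the normalized r-truncation of the leading left singular vector of A, one has ‖Aᵀx‖ ≥ √(r/m²)·‖A‖_F. -/

import Mathlib

open Finset

noncomputable def enorm' {ι : Type*} [Fintype ι] (x : ι → ℝ) : ℝ :=
  Real.sqrt (∑ i, x i ^ 2)

def dot {ι : Type*} [Fintype ι] (x y : ι → ℝ) : ℝ := ∑ i, x i * y i

noncomputable def l0 {ι : Type*} [Fintype ι] (x : ι → ℝ) : ℕ :=
  (Finset.univ.filter fun i => x i ≠ 0).card

def IsTrunc {ι : Type*} [Fintype ι] [DecidableEq ι] (a : ι → ℝ) (r : ℕ) (ar : ι → ℝ) : Prop :=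
  ∃ S : Finset ι, S.card = r ∧ (∀ i ∈ S, ar i = a i) ∧ (∀ i ∉ S, ar i = 0) ∧
    ∀ i ∈ S, ∀ j ∉ S, |a j| ≤ |a i|

noncomputable def lmax {m n' : Type*} [Fintype m] [Fintype n'] (A : Matrix m n' ℝ) : ℝ :=
  sSup {c | ∃ x : n' → ℝ, enorm' x = 1 ∧ c = enorm' (A.mulVec x)}

noncomputable def fnorm {m n' : Type*} [Fintype m] [Fintype n'] (A : Matrix m n' ℝ) : ℝ :=
  Real.sqrt (∑ i, ∑ j, A i j ^ 2)

def tri {n1 n2 n3 : ℕ} (A : Fin n1 → Fin n2 → Fin n3 → ℝ)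
    (x : Fin n1 → ℝ) (y : Fin n2 → ℝ) (z : Fin n3 → ℝ) : ℝ :=
  ∑ i, ∑ j, ∑ k, A i j k * x i * y j * z k

def mlin {d : ℕ} {n : Fin d → ℕ} (A : (∀ j, Fin (n j)) → ℝ)
    (x : ∀ j, Fin (n j) → ℝ) : ℝ :=
  ∑ i, A i * ∏ j, x j (i j)

section helpers

variable {ι : Type*} [Fintype ι]

lemma enorm_nonneg' (x : ι → ℝ) : 0 ≤ enorm' x := Real.sqrt_nonneg _

lemma enorm_sq' (x : ι → ℝ) : enorm' x ^ 2 = ∑ i, x i ^ 2 :=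
  Real.sq_sqrt (Finset.sum_nonneg fun i _ => sq_nonneg _)

lemma enorm_eq_zero_aux {v : ι → ℝ} (h : enorm' v = 0) : ∀ i, v i = 0 := by
  have hnn : 0 ≤ ∑ i, v i ^ 2 := Finset.sum_nonneg fun _ _ => sq_nonneg _
  have hs : ∑ i, v i ^ 2 = 0 := by
    have h1 := Real.sqrt_eq_zero'.mp h
    linarith
  intro i
  have := (Finset.sum_eq_zero_iff_of_nonneg (fun i _ => sq_nonneg (v i))).mp hs i (mem_univ i)
  exact pow_eq_zero_iff (two_ne_zero) |>.mp this

lemma enorm_smul' {c : ℝ} (hc : 0 ≤ c) (v : ι → ℝ) :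
    enorm' (fun i => c * v i) = c * enorm' v := by
  unfold enorm'
  have h : ∑ i, (c * v i) ^ 2 = c ^ 2 * ∑ i, v i ^ 2 := by
    rw [Finset.mul_sum]; exact Finset.sum_congr rfl fun i _ => by ring
  rw [h, Real.sqrt_mul (sq_nonneg c), Real.sqrt_sq hc]

lemma dot_le_enorm (x y : ι → ℝ) : dot x y ≤ enorm' x * enorm' y :=
  Real.sum_mul_le_sqrt_mul_sqrt _ _ _

lemma dot_self' (v : ι → ℝ) : dot v v = ∑ i, v i ^ 2 := by
  simp [dot, sq]

lemma dot_symm' (u v : ι → ℝ) : dot u v = dot v u := by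
  simp [dot, mul_comm]

lemma dot_comb (u v : ι → ℝ) (t : ℝ) :
    dot (fun i => u i + t * v i) (fun i => u i + t * v i)
      = dot u u + 2 * t * dot u v + t ^ 2 * dot v v := by
  unfold dot
  have : ∀ i, (u i + t * v i) * (u i + t * v i)
      = u i * u i + (2 * t) * (u i * v i) + t ^ 2 * (v i * v i) := fun i => by ring
  simp_rw [this, Finset.sum_add_distrib, ← Finset.mul_sum]

lemma dot_comb_right (u v w : ι → ℝ) (t : ℝ) :
    dot u (fun i => v i + t * w i) = dot u v + t * dot u w := by
  unfold dot
  rw [Finset.mul_sum, ← Finset.sum_add_distrib]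
  exact Finset.sum_congr rfl fun i _ => by ring

end helpers

section matrixhelpers

variable {a b : Type*} [Fintype a] [Fintype b]

lemma mulVec_comb (M : Matrix a b ℝ) (u v : b → ℝ) (t : ℝ) :
    M.mulVec (fun i => u i + t * v i) = fun j => M.mulVec u j + t * M.mulVec v j := by
  funext j
  simp only [Matrix.mulVec, dotProduct, mul_add, Finset.sum_add_distrib, Finset.mul_sum]
  congr 1
  exact Finset.sum_congr rfl fun i _ => by ring

lemma mulVec_smul' (M : Matrix a b ℝ) (c : ℝ) (v : b → ℝ) :
    M.mulVec (fun i => c * v i) = fun j => c * M.mulVec v j := by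
  funext j
  simp only [Matrix.mulVec, dotProduct, Finset.mul_sum]
  exact Finset.sum_congr rfl fun i _ => by ring

lemma dot_adj (M : Matrix a b ℝ) (u : b → ℝ) (v : a → ℝ) :
    dot (M.mulVec u) v = dot u (M.transpose.mulVec v) := by
  unfold dot
  simp only [Matrix.mulVec, dotProduct, Matrix.transpose_apply,
    Finset.sum_mul, Finset.mul_sum]
  rw [Finset.sum_comm]
  exact Finset.sum_congr rfl fun j _ => Finset.sum_congr rfl fun i _ => by ring

lemma mulVec_le_fnorm (M : Matrix a b ℝ) (u : b → ℝ) :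
    enorm' (M.mulVec u) ≤ fnorm M * enorm' u := by
  unfold enorm' fnorm
  rw [← Real.sqrt_mul (show (0:ℝ) ≤ ∑ i, ∑ j, M i j ^ 2 from Finset.sum_nonneg fun _ _ => Finset.sum_nonneg fun _ _ => sq_nonneg _)]
  apply Real.sqrt_le_sqrt
  rw [Finset.sum_mul]
  apply Finset.sum_le_sum
  intro i _
  have h := Finset.sum_mul_sq_le_sq_mul_sq Finset.univ (fun j => M i j) u
  simpa [Matrix.mulVec, dotProduct] using h

lemma le_lmax (M : Matrix a b ℝ) (u : b → ℝ) (hu : enorm' u = 1) :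
    enorm' (M.mulVec u) ≤ lmax M := by
  apply le_csSup
  · refine ⟨fnorm M, ?_⟩
    rintro c ⟨x, hx, rfl⟩
    calc enorm' (M.mulVec x) ≤ fnorm M * enorm' x := mulVec_le_fnorm M x
    _ = fnorm M := by rw [hx, mul_one]
  · exact ⟨u, hu, rfl⟩

lemma mulVec_le_lmax (M : Matrix a b ℝ) (hl : 0 ≤ lmax M) (v : b → ℝ) :
    enorm' (M.mulVec v) ≤ lmax M * enorm' v := by
  rcases eq_or_lt_of_le (enorm_nonneg' v) with h0 | h0
  · have hv : ∀ i, v i = 0 := enorm_eq_zero_aux h0.symm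
    have hveq : v = fun i => (0:ℝ) * v i := by funext i; simp [hv i]
    have hz : enorm' (M.mulVec v) = 0 := by
      rw [hveq, mulVec_smul' M 0 v, enorm_smul' le_rfl]; ring
    rw [hz]
    exact mul_nonneg hl (enorm_nonneg' _)
  · set c := enorm' v with hc
    have hu : enorm' (fun i => (1/c) * v i) = 1 := by
      rw [enorm_smul' (by positivity) v]; field_simp; exact hc.symm
    have h1 := le_lmax M _ hu
    rw [mulVec_smul' M (1/c) v, enorm_smul' (by positivity : (0:ℝ) ≤ 1/c)] at h1
    calc enorm' (M.mulVec v) = c * (1/c * enorm' (M.mulVec v)) := by field_simp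
    _ ≤ c * lmax M := by
        apply mul_le_mul_of_nonneg_left h1 h0.le
    _ = lmax M * c := mul_comm _ _

lemma transpose_le_lmax (M : Matrix a b ℝ) (hl : 0 ≤ lmax M) (w : a → ℝ) :
    enorm' (M.transpose.mulVec w) ≤ lmax M * enorm' w := by
  set t := enorm' (M.transpose.mulVec w) with ht
  have htn : 0 ≤ t := enorm_nonneg' _
  rcases eq_or_lt_of_le htn with h0 | h0
  · rw [← h0]; exact mul_nonneg hl (enorm_nonneg' _)
  · have key : t ^ 2 ≤ lmax M * t * enorm' w := by
      have h1 : t ^ 2 = dot (M.mulVec (M.transpose.mulVec w)) w := by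
        rw [dot_adj, dot_symm', dot_self', ← enorm_sq']
      rw [h1]
      calc dot (M.mulVec (M.transpose.mulVec w)) w
          ≤ enorm' (M.mulVec (M.transpose.mulVec w)) * enorm' w := dot_le_enorm _ _
      _ ≤ (lmax M * t) * enorm' w := by
          apply mul_le_mul_of_nonneg_right (mulVec_le_lmax M hl _) (enorm_nonneg' _)
    nlinarith [key, h0]

end matrixhelpers

lemma quad_zero (a b : ℝ) (ha : 0 ≤ a) (h : ∀ t : ℝ, 0 ≤ a * t ^ 2 + b * t) : b = 0 := by
  rcases eq_or_lt_of_le ha with h0 | h0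
  · have h1 := h 1
    have h2 := h (-1)
    nlinarith
  · have key : a * (-(b / (2 * a))) ^ 2 + b * (-(b / (2 * a))) = -(b ^ 2) / (4 * a) := by
      field_simp
      ring
    have h1 := h (-(b / (2 * a)))
    rw [key] at h1
    have h2 : 0 ≤ -(b ^ 2) := by
      have h4 : (0:ℝ) < 4 * a := by linarith
      calc (0:ℝ) = 0 * (4*a) := by ring
      _ ≤ (-(b ^ 2) / (4 * a)) * (4 * a) := by
          apply mul_le_mul_of_nonneg_right h1 h4.le
      _ = -(b ^ 2) := by field_simp
    nlinarith [sq_nonneg b]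

/-- If x is the normalized r-truncation of the leading left singular vector
of A, then ‖Aᵀx‖ ≥ √(r/m²)·‖A‖_F. -/
theorem stmt_13 {m n : ℕ} (A : Matrix (Fin m) (Fin n) ℝ) (hA : A ≠ 0)
    (xb : Fin m → ℝ) (hxb : enorm' xb = 1)
    (hlead : enorm' (A.transpose.mulVec xb) = lmax A)
    (r : ℕ) (hr1 : 1 ≤ r) (hrm : r ≤ m)
    (xr : Fin m → ℝ) (htr : IsTrunc xb r xr)
    (x : Fin m → ℝ) (hx : x = fun i => xr i / enorm' xr) :
    enorm' (A.transpose.mulVec x) ≥ Real.sqrt ((r : ℝ) / (m : ℝ) ^ 2) * fnorm A := by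
  have hm0 : 0 < m := by
    rcases Nat.eq_zero_or_pos m with h | h
    · subst h
      simp [enorm'] at hxb
    · exact h
  have hm0' : (0:ℝ) < m := by exact_mod_cast hm0
  set L := lmax A with hLdef
  have hL0 : 0 ≤ L := hlead ▸ enorm_nonneg' _
  have hsum1 : ∑ i, xb i ^ 2 = 1 := by
    have h := enorm_sq' xb
    rw [hxb] at h
    linarith [h]
  obtain ⟨S, hScard, hSin, hSout, hSmax⟩ := htr
  -- sum of squares of xr
  have hxr_sum : ∑ i, xr i ^ 2 = ∑ i ∈ S, xb i ^ 2 := by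
    rw [← Finset.sum_subset (Finset.subset_univ S)
      (fun i _ hi => by rw [hSout i hi]; ring)]
    exact Finset.sum_congr rfl fun i hi => by rw [hSin i hi]
  -- truncation lower bound
  have hrS : (r:ℝ) ≤ m * ∑ i ∈ S, xb i ^ 2 := by
    have hSne : S.Nonempty := Finset.card_pos.mp (by rw [hScard]; exact hr1)
    obtain ⟨i0, hi0S, hmin⟩ := S.exists_min_image (fun i => xb i ^ 2) hSne
    have h1 : (r:ℝ) * xb i0 ^ 2 ≤ ∑ i ∈ S, xb i ^ 2 := by
      have := Finset.card_nsmul_le_sum S (fun i => xb i ^ 2) (xb i0 ^ 2)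
        (fun i hi => hmin i hi)
      rw [hScard, nsmul_eq_mul] at this
      exact_mod_cast this
    have h2 : ∑ i ∈ Sᶜ, xb i ^ 2 ≤ ((m:ℝ) - r) * xb i0 ^ 2 := by
      have hb : ∀ j ∈ Sᶜ, xb j ^ 2 ≤ xb i0 ^ 2 := by
        intro j hj
        have habs := hSmax i0 hi0S j (Finset.mem_compl.mp hj)
        calc xb j ^ 2 = |xb j| ^ 2 := (sq_abs _).symm
        _ ≤ |xb i0| ^ 2 := pow_le_pow_left₀ (abs_nonneg _) habs 2
        _ = xb i0 ^ 2 := sq_abs _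
      have := Finset.sum_le_card_nsmul Sᶜ (fun i => xb i ^ 2) (xb i0 ^ 2) hb
      rw [Finset.card_compl, Fintype.card_fin, hScard, nsmul_eq_mul] at this
      have hcast : ((m - r : ℕ) : ℝ) = (m:ℝ) - r := by
        rw [Nat.cast_sub hrm]
      rw [hcast] at this
      exact this
    have h3 : ∑ i ∈ S, xb i ^ 2 + ∑ i ∈ Sᶜ, xb i ^ 2 = 1 := by
      rw [Finset.sum_add_sum_compl]
      exact hsum1
    have hc : 0 ≤ xb i0 ^ 2 := sq_nonneg _
    have hmr' : (r:ℝ) ≤ m := by exact_mod_cast hrm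
    have hr' : (1:ℝ) ≤ r := by exact_mod_cast hr1
    nlinarith [mul_le_mul_of_nonneg_left h1 (sub_nonneg.mpr hmr'),
      mul_le_mul_of_nonneg_right h2 (by linarith : (0:ℝ) ≤ (r:ℝ))]
  -- the defect vector y
  set y : Fin m → ℝ := fun i => xb i - xr i with hy_def
  have hy : ∀ i, y i = xb i - xr i := fun i => rfl
  have hxry : ∀ i, xr i * y i = 0 := by
    intro i
    by_cases hi : i ∈ S
    · have : y i = 0 := by rw [hy i, hSin i hi, sub_self]
      rw [this, mul_zero]
    · rw [hSout i hi, zero_mul]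
  have hdot_xb_y : dot xb y = dot y y := by
    unfold dot
    refine Finset.sum_congr rfl fun i _ => ?_
    have h := hxry i
    have hyi := hy i
    linear_combination h + (-(y i)) * hyi
  have hsq_split : ∀ i, xb i ^ 2 = xr i ^ 2 + y i ^ 2 := by
    intro i
    have h := hxry i
    have hyi := hy i
    linear_combination 2 * h - (xb i + xr i + y i) * hyi
  have hsum_split : ∑ i, xr i ^ 2 + ∑ i, y i ^ 2 = 1 := by
    rw [← Finset.sum_add_distrib, ← hsum1]
    exact Finset.sum_congr rfl fun i _ => (hsq_split i).symm
  -- basic dot facts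
  have hdxb : dot xb xb = 1 := by rw [dot_self', hsum1]
  have hdu : dot (A.transpose.mulVec xb) (A.transpose.mulVec xb) = L ^ 2 := by
    rw [dot_self', ← enorm_sq', hlead]
  -- PSD quadratic form nonnegativity
  have hQself : ∀ w : Fin m → ℝ,
      0 ≤ L ^ 2 * dot w w - dot (A.transpose.mulVec w) (A.transpose.mulVec w) := by
    intro w
    have h := transpose_le_lmax A hL0 w
    have h2 : enorm' (A.transpose.mulVec w) ^ 2 ≤ (L * enorm' w) ^ 2 :=
      pow_le_pow_left₀ (enorm_nonneg' _) h 2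
    rw [mul_pow] at h2
    have e1 : dot w w = enorm' w ^ 2 := by rw [dot_self', enorm_sq']
    have e2 : dot (A.transpose.mulVec w) (A.transpose.mulVec w)
        = enorm' (A.transpose.mulVec w) ^ 2 := by rw [dot_self', enorm_sq']
    rw [e1, e2]
    linarith
  -- eigen-like relation via quadratic argument
  have hb0 : L ^ 2 * dot xb y - dot (A.transpose.mulVec xb) (A.transpose.mulVec y) = 0 := by
    have hz := quad_zero (L ^ 2 * dot y y - dot (A.transpose.mulVec y) (A.transpose.mulVec y))
      (2 * (L ^ 2 * dot xb y - dot (A.transpose.mulVec xb) (A.transpose.mulVec y)))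
      (hQself y) ?_
    · linarith
    · intro t
      have h := hQself (fun i => xb i + t * y i)
      rw [dot_comb, mulVec_comb, dot_comb, hdxb, hdu] at h
      ring_nf at h ⊢
      linarith
  -- key inner product identity
  have hxr_eq : xr = fun i => xb i + (-1) * y i := by
    funext i
    linear_combination hy i
  have hkey : dot (A.transpose.mulVec xb) (A.transpose.mulVec xr)
      = L ^ 2 * ∑ i, xr i ^ 2 := by
    nth_rewrite 1 [hxr_eq]
    rw [mulVec_comb, dot_comb_right, hdu]
    have h1 : dot (A.transpose.mulVec xb) (A.transpose.mulVec y) = L ^ 2 * dot xb y := by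
      linarith
    rw [h1, hdot_xb_y, dot_self']
    linear_combination (-(L ^ 2)) * hsum_split
  -- Cauchy-Schwarz chain
  have hCS : dot (A.transpose.mulVec xb) (A.transpose.mulVec xr)
      ≤ L * enorm' (A.transpose.mulVec xr) := by
    have h := dot_le_enorm (A.transpose.mulVec xb) (A.transpose.mulVec xr)
    rw [hlead] at h
    exact h
  have hdagger : L ^ 2 * ∑ i, xr i ^ 2 ≤ L * enorm' (A.transpose.mulVec xr) := by
    rw [← hkey]; exact hCS
  -- fnorm bounds
  have hfn : fnorm A ≤ Real.sqrt m * L := by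
    have key : ∀ i : Fin m, ∑ j, A i j ^ 2 ≤ L ^ 2 := by
      intro i
      have he : enorm' (fun k => if k = i then (1:ℝ) else 0) = 1 := by
        unfold enorm'
        have hp : ∀ k : Fin m, ((if k = i then (1:ℝ) else 0)) ^ 2
            = if k = i then (1:ℝ) else 0 := fun k => by split <;> norm_num
        simp_rw [hp, Finset.sum_ite_eq' Finset.univ i (fun _ => (1:ℝ)),
          if_pos (Finset.mem_univ i), Real.sqrt_one]
      have hmv : A.transpose.mulVec (fun k => if k = i then (1:ℝ) else 0)
          = fun j => A i j := by
        funext j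
        simp [Matrix.mulVec, dotProduct, Matrix.transpose_apply,
          mul_ite, mul_one, mul_zero, Finset.sum_ite_eq']
      have h := transpose_le_lmax A hL0 (fun k => if k = i then (1:ℝ) else 0)
      rw [hmv, he, mul_one] at h
      have h2 := pow_le_pow_left₀ (enorm_nonneg' _) h 2
      rw [enorm_sq'] at h2
      exact h2
    have hfs : ∑ i, ∑ j, A i j ^ 2 ≤ m * L ^ 2 := by
      calc ∑ i, ∑ j, A i j ^ 2 ≤ ∑ _i : Fin m, L ^ 2 :=
        Finset.sum_le_sum fun i _ => key i
      _ = m * L ^ 2 := by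
        simp [Finset.sum_const, Finset.card_univ, nsmul_eq_mul]
    unfold fnorm
    calc Real.sqrt (∑ i, ∑ j, A i j ^ 2) ≤ Real.sqrt (m * L ^ 2) :=
      Real.sqrt_le_sqrt hfs
    _ = Real.sqrt m * L := by
      rw [Real.sqrt_mul (by positivity), Real.sqrt_sq hL0]
  have hfn_pos : 0 < fnorm A := by
    have hAne : ∃ i j, A i j ≠ 0 := by
      by_contra h
      push_neg at h
      exact hA (by ext i j; exact h i j)
    obtain ⟨i, j, hij⟩ := hAne
    have h1 : A i j ^ 2 ≤ ∑ j', A i j' ^ 2 :=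
      Finset.single_le_sum (f := fun j' => A i j' ^ 2) (fun _ _ => sq_nonneg _)
        (Finset.mem_univ j)
    have h2 : ∑ j', A i j' ^ 2 ≤ ∑ i', ∑ j', A i' j' ^ 2 :=
      Finset.single_le_sum (f := fun i' => ∑ j', A i' j' ^ 2)
        (fun _ _ => Finset.sum_nonneg fun _ _ => sq_nonneg _) (Finset.mem_univ i)
    have h3 : 0 < A i j ^ 2 := lt_of_le_of_ne (sq_nonneg _) (Ne.symm (pow_ne_zero 2 hij))
    exact Real.sqrt_pos.mpr (by linarith)
  have hLpos : 0 < L := by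
    rcases eq_or_lt_of_le hL0 with h0 | h0
    · exfalso
      rw [← h0, mul_zero] at hfn
      linarith
    · exact h0
  -- enorm' xr facts
  have hxr_lb : (r:ℝ) / m ≤ ∑ i, xr i ^ 2 := by
    rw [hxr_sum, div_le_iff₀ hm0']
    linarith [hrS]
  have hxr_pos : 0 < ∑ i, xr i ^ 2 := by
    have : (0:ℝ) < (r:ℝ) / m := by positivity
    linarith
  have hexr_pos : 0 < enorm' xr := Real.sqrt_pos.mpr hxr_pos
  have hexr_sq : enorm' xr ^ 2 = ∑ i, xr i ^ 2 := enorm_sq' xr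
  -- bound on enorm' (Aᵀ xr)
  have hAxr : L * ∑ i, xr i ^ 2 ≤ enorm' (A.transpose.mulVec xr) := by
    have h' : L * (L * ∑ i, xr i ^ 2) ≤ L * enorm' (A.transpose.mulVec xr) := by
      calc L * (L * ∑ i, xr i ^ 2) = L ^ 2 * ∑ i, xr i ^ 2 := by ring
      _ ≤ L * enorm' (A.transpose.mulVec xr) := hdagger
    exact le_of_mul_le_mul_left h' hLpos
  -- enorm' (Aᵀ x)
  have hx' : x = fun i => (1 / enorm' xr) * xr i := by
    rw [hx]; funext i; field_simp
  have hAx_enorm : enorm' (A.transpose.mulVec x)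
      = (1 / enorm' xr) * enorm' (A.transpose.mulVec xr) := by
    rw [hx', mulVec_smul', enorm_smul' (by positivity : (0:ℝ) ≤ 1 / enorm' xr)]
  have hfinal : L * enorm' xr ≤ enorm' (A.transpose.mulVec x) := by
    rw [hAx_enorm]
    have h := mul_le_mul_of_nonneg_left hAxr
      (le_of_lt (one_div_pos.mpr hexr_pos))
    calc L * enorm' xr = (1 / enorm' xr) * (L * enorm' xr ^ 2) := by
          field_simp
    _ = (1 / enorm' xr) * (L * ∑ i, xr i ^ 2) := by rw [hexr_sq]
    _ ≤ (1 / enorm' xr) * enorm' (A.transpose.mulVec xr) := h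
  have hexr_ge : Real.sqrt ((r:ℝ) / m) ≤ enorm' xr := by
    unfold enorm'
    exact Real.sqrt_le_sqrt hxr_lb
  rw [ge_iff_le]
  calc Real.sqrt ((r:ℝ) / (m:ℝ) ^ 2) * fnorm A
      ≤ Real.sqrt ((r:ℝ) / (m:ℝ) ^ 2) * (Real.sqrt m * L) := by
        apply mul_le_mul_of_nonneg_left hfn (Real.sqrt_nonneg _)
  _ = Real.sqrt ((r:ℝ) / (m:ℝ) ^ 2 * m) * L := by
        rw [← mul_assoc, ← Real.sqrt_mul (by positivity)]
  _ = Real.sqrt ((r:ℝ) / m) * L := by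
        rw [show (r:ℝ) / (m:ℝ) ^ 2 * m = (r:ℝ) / m by field_simp]
  _ ≤ enorm' xr * L := mul_le_mul_of_nonneg_right hexr_ge hL0
  _ = L * enorm' xr := mul_comm _ _
  _ ≤ enorm' (A.transpose.mulVec x) := hfinal
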